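/- Let n ≥ 2. Define Λ⁺ = {(t,x,τ,ξ,z,η) ∈ (ℝ×ℝ^n×ℝ×ℝ^n)×(ℝ^n×ℝ^n) : η ≠ 0, x = z + tη/‖η‖, ξ = −η, τ = ‖η‖} and its inverse relation Λ^{+,inv} = {(z,η,t,x,τ,ξ) ∈ (ℝ^n×ℝ^n)×(ℝ×ℝ^n×ℝ×ℝ^n) : η ≠ 0, x = z + tη/‖η‖, ξ = −η, τ = ‖η‖}. In the ambient space W = (ℝ^n×ℝ^n)×(ℝ×ℝ^n×ℝ×ℝ^n)×(ℝ×ℝ^n×ℝ×ℝ^n)×(ℝ^n×ℝ^n), set 𝒳 = Λ^{+,inv} × Λ⁺ and 𝒴 = {(a,p,q,b) ∈ W : p = q}. Then: (i) 𝒳 ∩ 𝒴 equals the image of the injective map Ψ(t,z,η) = ( (z, η, t, z + tη/‖η‖, ‖η‖, −η), (t, z + tη/‖η‖, ‖η‖, −η, z, η) ), (t,z,η) ∈ ℝ × ℝ^n × (ℝ^n∖{0}); and (ii) for every w ∈ 𝒳 ∩ 𝒴, tangentConeAt ℝ (𝒳∩𝒴) w = (tangentConeAt ℝ 𝒳 w)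 ∩ (tangentConeAt ℝ 𝒴 w). -/

import Mathlib

open scoped Real

/-- Phase space point `(t, x, τ, ξ)` of `T^*ℝ^{1+n}`. -/
abbrev Phase (n : ℕ) :=
  ℝ × EuclideanSpace ℝ (Fin n) × ℝ × EuclideanSpace ℝ (Fin n)

/-- Point `(z, η)` of `T^*ℝ^n`. -/
abbrev Base (n : ℕ) :=
  EuclideanSpace ℝ (Fin n) × EuclideanSpace ℝ (Fin n)

/-- The twisted canonical relation `Λ⁺` of the forward half-wave parametrix. -/
def LambdaPlus (n : ℕ) : Set (Phase n × Base n) := fun p =>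
  p.2.2 ≠ 0 ∧
  p.1.2.1 = p.2.1 + p.1.1 • (‖p.2.2‖⁻¹ • p.2.2) ∧
  p.1.2.2.2 = -p.2.2 ∧
  p.1.2.2.1 = ‖p.2.2‖

/-- The inverse relation `Λ^{+,inv}` of `Λ⁺`. -/
def LambdaPlusInv (n : ℕ) : Set (Base n × Phase n) := fun p =>
  p.1.2 ≠ 0 ∧
  p.2.2.1 = p.1.1 + p.2.1 • (‖p.1.2‖⁻¹ • p.1.2) ∧
  p.2.2.2.2 = -p.1.2 ∧
  p.2.2.2.1 = ‖p.1.2‖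

/-- The parametrization `Ψ(t, z, η)` of the composition fiber of `Λ^{+,inv}` and `Λ⁺`. -/
noncomputable def Psi (n : ℕ)
    (v : ℝ × EuclideanSpace ℝ (Fin n) × EuclideanSpace ℝ (Fin n)) :
    (Base n × Phase n) × (Phase n × Base n) :=
  (((v.2.1, v.2.2), (v.1, v.2.1 + v.1 • (‖v.2.2‖⁻¹ • v.2.2), ‖v.2.2‖, -v.2.2)),
   ((v.1, v.2.1 + v.1 • (‖v.2.2‖⁻¹ • v.2.2), ‖v.2.2‖, -v.2.2), (v.2.1, v.2.2)))

namespace CleanAux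

open Filter Topology Set ContinuousLinearMap

variable {n : ℕ}

abbrev Eu (n : ℕ) := EuclideanSpace ℝ (Fin n)
abbrev V (n : ℕ) := ℝ × Eu n × Eu n
abbrev W (n : ℕ) := (Base n × Phase n) × (Phase n × Base n)

/-- The nonlinear part of the parametrization. -/
noncomputable def fmap (n : ℕ) (v : V n) : Eu n × ℝ :=
  (v.2.1 + v.1 • (‖v.2.2‖⁻¹ • v.2.2), ‖v.2.2‖)

lemma fmap_diff {a : V n} (ha : a.2.2 ≠ 0) : DifferentiableAt ℝ (fmap n) a := by
  have hη : DifferentiableAt ℝ (fun v : V n => v.2.2) a := differentiableAt_snd.snd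
  have hnorm : DifferentiableAt ℝ (fun v : V n => ‖v.2.2‖) a := hη.norm (𝕜 := ℝ) ha
  refine DifferentiableAt.prodMk ?_ hnorm
  exact differentiableAt_snd.fst.add
    (differentiableAt_fst.smul ((hnorm.inv (norm_ne_zero_iff.2 ha)).smul hη))

/-- The candidate tangent map. -/
noncomputable def Lmap (n : ℕ) (D : V n →L[ℝ] Eu n × ℝ) : V n →L[ℝ] W n :=
  let P1 : V n →L[ℝ] ℝ := fst ℝ ℝ (Eu n × Eu n)
  let PZ : V n →L[ℝ] Eu n := (fst ℝ (Eu n) (Eu n)).comp (snd ℝ ℝ (Eu n × Eu n))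
  let PH : V n →L[ℝ] Eu n := (snd ℝ (Eu n) (Eu n)).comp (snd ℝ ℝ (Eu n × Eu n))
  let Lp : V n →L[ℝ] Phase n :=
    P1.prod (((fst ℝ (Eu n) ℝ).comp D).prod (((snd ℝ (Eu n) ℝ).comp D).prod (-PH)))
  let Lb : V n →L[ℝ] Base n := PZ.prod PH
  (Lb.prod Lp).prod (Lp.prod Lb)

lemma Lmap_apply (D : V n →L[ℝ] Eu n × ℝ) (u : V n) :
    Lmap n D u =
      (((u.2.1, u.2.2), (u.1, (D u).1, (D u).2, -u.2.2)),
       ((u.1, (D u).1, (D u).2, -u.2.2), (u.2.1, u.2.2))) := rfl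

lemma psi_hasFDerivAt {a : V n} (ha : a.2.2 ≠ 0) :
    HasFDerivAt (Psi n) (Lmap n (fderiv ℝ (fmap n) a)) a := by
  have hD : HasFDerivAt (fmap n) (fderiv ℝ (fmap n) a) a := (fmap_diff ha).hasFDerivAt
  have ht : HasFDerivAt (fun v : V n => v.1) (fst ℝ ℝ (Eu n × Eu n)) a := hasFDerivAt_fst
  have hz : HasFDerivAt (fun v : V n => v.2.1)
      ((fst ℝ (Eu n) (Eu n)).comp (snd ℝ ℝ (Eu n × Eu n))) a := hasFDerivAt_snd.fst
  have hη : HasFDerivAt (fun v : V n => v.2.2)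
      ((snd ℝ (Eu n) (Eu n)).comp (snd ℝ ℝ (Eu n × Eu n))) a := hasFDerivAt_snd.snd
  have hp := ht.prodMk (hD.fst.prodMk (hD.snd.prodMk hη.neg))
  have hb := hz.prodMk hη
  exact (hb.prodMk hp).prodMk (hp.prodMk hb)

lemma Dmat_z {a : V n} (ha : a.2.2 ≠ 0) (δz : Eu n) :
    fderiv ℝ (fmap n) a ((0 : ℝ), δz, (0 : Eu n)) = (δz, (0 : ℝ)) := by
  have hD : HasFDerivAt (fmap n) (fderiv ℝ (fmap n) a) a := (fmap_diff ha).hasFDerivAt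
  set J : Eu n →L[ℝ] V n :=
    (0 : Eu n →L[ℝ] ℝ).prod ((ContinuousLinearMap.id ℝ (Eu n)).prod 0) with hJ
  have hincl : HasFDerivAt (fun s : Eu n => a + ((0 : ℝ), s, (0 : Eu n))) J 0 :=
    J.hasFDerivAt.const_add a
  have e0 : a + ((0 : ℝ), (0 : Eu n), (0 : Eu n)) = a := by
    simp [Prod.mk_zero_zero]
  have hD' : HasFDerivAt (fmap n) (fderiv ℝ (fmap n) a)
      (a + ((0 : ℝ), (0 : Eu n), (0 : Eu n))) := by rw [e0]; exact hD
  have h1 := HasFDerivAt.comp (0 : Eu n) hD' hincl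
  have h2 : HasFDerivAt (fun s : Eu n => fmap n (a + ((0 : ℝ), s, (0 : Eu n))))
      ((ContinuousLinearMap.id ℝ (Eu n)).prod (0 : Eu n →L[ℝ] ℝ)) 0 := by
    have hfun : (fun s : Eu n => fmap n (a + ((0 : ℝ), s, (0 : Eu n))))
        = fun s => (a.2.1 + a.1 • (‖a.2.2‖⁻¹ • a.2.2) + s, ‖a.2.2‖) := by
      funext s
      show (a.2.1 + s + (a.1 + 0) • (‖a.2.2 + 0‖⁻¹ • (a.2.2 + 0)), ‖a.2.2 + 0‖) = _
      rw [add_zero, add_zero, add_right_comm]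
    rw [hfun]
    exact ((hasFDerivAt_id (0 : Eu n)).const_add _).prodMk (hasFDerivAt_const _ _)
  have key : (fderiv ℝ (fmap n) a).comp J
      = (ContinuousLinearMap.id ℝ (Eu n)).prod (0 : Eu n →L[ℝ] ℝ) := h1.unique h2
  calc fderiv ℝ (fmap n) a ((0 : ℝ), δz, (0 : Eu n))
      = ((fderiv ℝ (fmap n) a).comp J) δz := by simp [hJ]
    _ = ((ContinuousLinearMap.id ℝ (Eu n)).prod (0 : Eu n →L[ℝ] ℝ)) δz := by rw [key]
    _ = (δz, (0 : ℝ)) := rfl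

lemma tangentCone_of_isOpen {G : Type*} [NormedAddCommGroup G] [NormedSpace ℝ G]
    {s : Set G} (hs : IsOpen s) {x : G} (hx : x ∈ s) :
    tangentConeAt ℝ s x = Set.univ := by
  have h : 𝓝[s] x = 𝓝[Set.univ] x := by
    rw [nhdsWithin_univ, nhdsWithin_eq_nhds.2 (hs.mem_nhds hx)]
  rw [tangentConeAt_congr h, tangentConeAt_univ]

/-- The key limit computation: a tangent-cone witness sequence for one of the graph
relations forces the graph-derivative relation between the limits. -/
lemma block_limit {a : V n} (ha : a.2.2 ≠ 0) {α : Type*} {l : Filter α} [l.NeBot]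
    {c : α → ℝ} {δ : α → V n} {ρ : α → Eu n × ℝ} {vV : V n} {vρ : Eu n × ℝ}
    (hc : Filter.Tendsto δ l (𝓝 0))
    (hdom : ∀ᶠ k in l, a.2.2 + (δ k).2.2 ≠ 0)
    (hconstr : ∀ᶠ k in l, fmap n (a + δ k) = fmap n a + ρ k)
    (hδ : Filter.Tendsto (fun k => c k • δ k) l (𝓝 vV))
    (hρ : Filter.Tendsto (fun k => c k • ρ k) l (𝓝 vρ)) :
    fderiv ℝ (fmap n) a vV = vρ := by
  have hD := ((fmap_diff ha).hasFDerivAt).hasFDerivWithinAt (s := {v : V n | v.2.2 ≠ 0})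
  have hdom' : ∀ᶠ k in l, a + δ k ∈ {v : V n | v.2.2 ≠ 0} := hdom
  have h1 := hD.lim hc hdom' hδ
  have h2 : Filter.Tendsto (fun k => c k • (fmap n (a + δ k) - fmap n a))
      l (𝓝 vρ) := by
    refine Filter.Tendsto.congr' ?_ hρ
    filter_upwards [hconstr] with k hk
    rw [hk, add_sub_cancel_left]
  exact tendsto_nhds_unique h1 h2

end CleanAux

open CleanAux Filter Topology Set in
/-- Clean intersection computation for the composition `E₊* ∘ (N ∘ E₊)`: the fiber
`𝒳 ∩ 𝒴` is the image of the injective map `Ψ`, and at every point the tangent cone of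
the intersection is the intersection of the tangent cones. -/
theorem clean_intersection_adjoint (n : ℕ) (hn : 2 ≤ n) :
    (Set.InjOn (Psi n)
        {v : ℝ × EuclideanSpace ℝ (Fin n) × EuclideanSpace ℝ (Fin n) | v.2.2 ≠ 0} ∧
      ({w : (Base n × Phase n) × (Phase n × Base n) |
          w.1 ∈ LambdaPlusInv n ∧ w.2 ∈ LambdaPlus n} ∩
        {w : (Base n × Phase n) × (Phase n × Base n) | w.1.2 = w.2.1})
        = Psi n ''
          {v : ℝ × EuclideanSpace ℝ (Fin n) × EuclideanSpace ℝ (Fin n) | v.2.2 ≠ 0}) ∧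
    ∀ w ∈ ({w : (Base n × Phase n) × (Phase n × Base n) |
              w.1 ∈ LambdaPlusInv n ∧ w.2 ∈ LambdaPlus n} ∩
            {w : (Base n × Phase n) × (Phase n × Base n) | w.1.2 = w.2.1}),
      tangentConeAt ℝ
          ({w : (Base n × Phase n) × (Phase n × Base n) |
              w.1 ∈ LambdaPlusInv n ∧ w.2 ∈ LambdaPlus n} ∩
           {w : (Base n × Phase n) × (Phase n × Base n) | w.1.2 = w.2.1}) w
        = tangentConeAt ℝ
            {w : (Base n × Phase n) × (Phase n × Base n) |
              w.1 ∈ LambdaPlusInv n ∧ w.2 ∈ LambdaPlus n} w ∩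
          tangentConeAt ℝ
            {w : (Base n × Phase n) × (Phase n × Base n) | w.1.2 = w.2.1} w := by
  have himage : ({w : W n | w.1 ∈ LambdaPlusInv n ∧ w.2 ∈ LambdaPlus n} ∩
      {w : W n | w.1.2 = w.2.1}) = Psi n '' {v : V n | v.2.2 ≠ 0} := by
    ext w
    obtain ⟨⟨⟨z', η'⟩, t', x', τ', ξ'⟩, ⟨t, x, τ, ξ⟩, z, η⟩ := w
    constructor
    · rintro ⟨⟨⟨g1, g2, g3, g4⟩, h1, h2, h3, h4⟩, hmid⟩
      have hmid' : ((t', x', τ', ξ') : Phase n) = (t, x, τ, ξ) := hmid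
      have g2' : x' = z' + t' • (‖η'‖⁻¹ • η') := g2
      have g3' : ξ' = -η' := g3
      have h1' : η ≠ 0 := h1
      have h2' : x = z + t • (‖η‖⁻¹ • η) := h2
      have h3' : ξ = -η := h3
      have h4' : τ = ‖η‖ := h4
      have ht : t' = t := congrArg (fun p : Phase n => p.1) hmid'
      have hx : x' = x := congrArg (fun p : Phase n => p.2.1) hmid'
      have hτ : τ' = τ := congrArg (fun p : Phase n => p.2.2.1) hmid'
      have hξ : ξ' = ξ := congrArg (fun p : Phase n => p.2.2.2) hmid'
      have hη : η' = η := by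
        have h : -η' = -η := by rw [← g3', hξ, h3']
        exact neg_injective h
      have hz : z' = z := by
        have h := g2'
        rw [hx, ht, hη, h2'] at h
        exact (add_right_cancel h).symm
      refine ⟨(t, z, η), h1', ?_⟩
      simp [Psi, Prod.ext_iff, h2', h3', h4', ht, hx, hτ, hξ, hη, hz]
    · rintro ⟨v, hv, hvw⟩
      refine ⟨⟨?_, ?_⟩, ?_⟩
      · rw [← hvw]; exact ⟨hv, rfl, rfl, rfl⟩
      · rw [← hvw]; exact ⟨hv, rfl, rfl, rfl⟩
      · rw [← hvw]; rfl
  have hinj : Set.InjOn (Psi n) {v : V n | v.2.2 ≠ 0} := by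
    intro v _ v' _ h
    have ht : v.1 = v'.1 := congrArg (fun w : W n => w.1.2.1) h
    have hz : v.2.1 = v'.2.1 := congrArg (fun w : W n => w.1.1.1) h
    have hη : v.2.2 = v'.2.2 := congrArg (fun w : W n => w.1.1.2) h
    exact Prod.ext ht (Prod.ext hz hη)
  refine ⟨⟨hinj, himage⟩, ?_⟩
  intro w hw
  rw [himage] at hw
  obtain ⟨a, ha, rfl⟩ := hw
  have ha' : a.2.2 ≠ 0 := ha
  refine Set.Subset.antisymm
    (Set.subset_inter (tangentConeAt_mono Set.inter_subset_left)
      (tangentConeAt_mono Set.inter_subset_right)) ?_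
  rintro v ⟨hX, hY⟩
  -- Step 1: the linear constraint from the diagonal.
  have hmidv : v.1.2 = v.2.1 := by
    obtain ⟨_, l, hl, c, d, hc, hd, hcd⟩ := exists_fun_of_mem_tangentConeAt hY
    have h0 : ∀ᶠ k in l, (c k • d k).1.2 - (c k • d k).2.1 = 0 := by
      filter_upwards [hd] with k hk
      have h' : (Psi n a).1.2 + (d k).1.2 = (Psi n a).2.1 + (d k).2.1 := hk
      have hbase : (Psi n a).1.2 = (Psi n a).2.1 := rfl
      rw [hbase] at h'
      have hdk : (d k).1.2 = (d k).2.1 := add_left_cancel h'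
      show c k • (d k).1.2 - c k • (d k).2.1 = 0
      rw [hdk, sub_self]
    have hlim : Tendsto (fun k => (c k • d k).1.2 - (c k • d k).2.1) l
        (𝓝 (v.1.2 - v.2.1)) := by
      have hcont : Continuous (fun w : W n => w.1.2 - w.2.1) := by fun_prop
      exact (hcont.tendsto v).comp hcd
    have := tendsto_nhds_unique hlim (Tendsto.congr' (Filter.EventuallyEq.symm h0)
      tendsto_const_nhds)
    exact sub_eq_zero.1 this
  -- Step 2: the derivative constraints from the two graph relations.
  obtain ⟨_, l, hl, c, d, hc, hd, hcd⟩ := exists_fun_of_mem_tangentConeAt hX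
  have hd1 : ∀ᶠ k in l, (Psi n a + d k).1 ∈ LambdaPlusInv n := hd.mono fun k hk => hk.1
  have hd2 : ∀ᶠ k in l, (Psi n a + d k).2 ∈ LambdaPlus n := hd.mono fun k hk => hk.2
  have hDv1 : fderiv ℝ (fmap n) a (v.1.2.1, v.1.1.1, v.1.1.2)
      = (v.1.2.2.1, v.1.2.2.2.1) := by
    refine block_limit ha' (c := c) (δ := fun k => ((d k).1.2.1, (d k).1.1.1, (d k).1.1.2))
        (by
          have hcont : Continuous (fun w : W n => ((w.1.2.1, w.1.1.1, w.1.1.2) : V n)) := by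
            fun_prop
          exact (hcont.tendsto 0).comp hc)
      (ρ := fun k => ((d k).1.2.2.1, (d k).1.2.2.2.1)) ?_ ?_ ?_ ?_
    · filter_upwards [hd1] with k hk; exact hk.1
    · filter_upwards [hd1] with k hk
      exact Prod.ext hk.2.1.symm hk.2.2.2.symm
    · have hcont : Continuous (fun w : W n => ((w.1.2.1, w.1.1.1, w.1.1.2) : V n)) := by
        fun_prop
      exact (hcont.tendsto v).comp hcd
    · have hcont : Continuous (fun w : W n => ((w.1.2.2.1, w.1.2.2.2.1) : Eu n × ℝ)) := by
        fun_prop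
      exact (hcont.tendsto v).comp hcd
  have hDv2 : fderiv ℝ (fmap n) a (v.2.1.1, v.2.2.1, v.2.2.2)
      = (v.2.1.2.1, v.2.1.2.2.1) := by
    refine block_limit ha' (c := c) (δ := fun k => ((d k).2.1.1, (d k).2.2.1, (d k).2.2.2))
        (by
          have hcont : Continuous (fun w : W n => ((w.2.1.1, w.2.2.1, w.2.2.2) : V n)) := by
            fun_prop
          exact (hcont.tendsto 0).comp hc)
      (ρ := fun k => ((d k).2.1.2.1, (d k).2.1.2.2.1)) ?_ ?_ ?_ ?_
    · filter_upwards [hd2] with k hk; exact hk.1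
    · filter_upwards [hd2] with k hk
      exact Prod.ext hk.2.1.symm hk.2.2.2.symm
    · have hcont : Continuous (fun w : W n => ((w.2.1.1, w.2.2.1, w.2.2.2) : V n)) := by
        fun_prop
      exact (hcont.tendsto v).comp hcd
    · have hcont : Continuous (fun w : W n => ((w.2.1.2.1, w.2.1.2.2.1) : Eu n × ℝ)) := by
        fun_prop
      exact (hcont.tendsto v).comp hcd
  have hξ1 : v.1.2.2.2.2 = -v.1.1.2 := by
    have h0 : ∀ᶠ k in l, (c k • d k).1.2.2.2.2 = -(c k • d k).1.1.2 := by
      filter_upwards [hd1] with k hk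
      have k3 : -a.2.2 + (d k).1.2.2.2.2 = -(a.2.2 + (d k).1.1.2) := hk.2.2.1
      rw [neg_add] at k3
      have hdk := add_left_cancel k3
      show c k • (d k).1.2.2.2.2 = -(c k • (d k).1.1.2)
      rw [hdk, smul_neg]
    have l1 : Tendsto (fun k => (c k • d k).1.2.2.2.2) l (𝓝 v.1.2.2.2.2) := by
      have hcont : Continuous (fun w : W n => w.1.2.2.2.2) := by fun_prop
      exact (hcont.tendsto v).comp hcd
    have l2 : Tendsto (fun k => -(c k • d k).1.1.2) l (𝓝 (-v.1.1.2)) := by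
      have hcont : Continuous (fun w : W n => -w.1.1.2) := by fun_prop
      exact (hcont.tendsto v).comp hcd
    exact tendsto_nhds_unique l1 (Tendsto.congr' (Filter.EventuallyEq.symm h0) l2)
  have hξ2 : v.2.1.2.2.2 = -v.2.2.2 := by
    have h0 : ∀ᶠ k in l, (c k • d k).2.1.2.2.2 = -(c k • d k).2.2.2 := by
      filter_upwards [hd2] with k hk
      have k3 : -a.2.2 + (d k).2.1.2.2.2 = -(a.2.2 + (d k).2.2.2) := hk.2.2.1
      rw [neg_add] at k3
      have hdk := add_left_cancel k3
      show c k • (d k).2.1.2.2.2 = -(c k • (d k).2.2.2)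
      rw [hdk, smul_neg]
    have l1 : Tendsto (fun k => (c k • d k).2.1.2.2.2) l (𝓝 v.2.1.2.2.2) := by
      have hcont : Continuous (fun w : W n => w.2.1.2.2.2) := by fun_prop
      exact (hcont.tendsto v).comp hcd
    have l2 : Tendsto (fun k => -(c k • d k).2.2.2) l (𝓝 (-v.2.2.2)) := by
      have hcont : Continuous (fun w : W n => -w.2.2.2) := by fun_prop
      exact (hcont.tendsto v).comp hcd
    exact tendsto_nhds_unique l1 (Tendsto.congr' (Filter.EventuallyEq.symm h0) l2)
  -- Step 3: identify the two parameter vectors.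
  have ht12 : v.1.2.1 = v.2.1.1 := congrArg (fun p : Phase n => p.1) hmidv
  have hη12 : v.1.1.2 = v.2.2.2 := by
    have h := congrArg (fun p : Phase n => p.2.2.2) hmidv
    rw [hξ1, hξ2] at h
    exact neg_injective h
  have hz12 : v.1.1.1 = v.2.2.1 := by
    have hsub : ((v.1.2.1, v.1.1.1, v.1.1.2) : V n) - (v.2.1.1, v.2.2.1, v.2.2.2)
        = ((0 : ℝ), v.1.1.1 - v.2.2.1, (0 : Eu n)) := by
      refine Prod.ext ?_ (Prod.ext rfl ?_)
      · show v.1.2.1 - v.2.1.1 = 0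
        rw [ht12, sub_self]
      · show v.1.1.2 - v.2.2.2 = 0
        rw [hη12, sub_self]
    have h0 : fderiv ℝ (fmap n) a ((0 : ℝ), v.1.1.1 - v.2.2.1, (0 : Eu n)) = 0 := by
      rw [← hsub, map_sub, hDv1, hDv2, hmidv, sub_self]
    have h1 := Dmat_z ha' (v.1.1.1 - v.2.2.1)
    rw [h0] at h1
    have := congrArg Prod.fst h1.symm
    exact sub_eq_zero.1 this
  -- Step 4: conclude.
  have hphase : v.1.2 = (v.1.2.1,
      (fderiv ℝ (fmap n) a (v.1.2.1, v.1.1.1, v.1.1.2)).1,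
      (fderiv ℝ (fmap n) a (v.1.2.1, v.1.1.1, v.1.1.2)).2, -v.1.1.2) := by
    refine Prod.ext rfl (Prod.ext ?_ (Prod.ext ?_ ?_))
    · exact (congrArg Prod.fst hDv1).symm
    · exact (congrArg (fun p : Eu n × ℝ => p.2) hDv1).symm
    · exact hξ1
  have hv_eq : v = Lmap n (fderiv ℝ (fmap n) a) (v.1.2.1, v.1.1.1, v.1.1.2) := by
    rw [Lmap_apply]
    refine Prod.ext (Prod.ext rfl hphase) (Prod.ext ?_ ?_)
    · rw [← hmidv]; exact hphase
    · exact Prod.ext hz12.symm hη12.symm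
  rw [himage, hv_eq]
  have hopen : IsOpen {v : V n | v.2.2 ≠ 0} :=
    IsOpen.preimage (by fun_prop : Continuous fun v : V n => v.2.2)
      isOpen_compl_singleton
  have hmaps := ((psi_hasFDerivAt ha').hasFDerivWithinAt
    (s := {v : V n | v.2.2 ≠ 0})).mapsTo_tangent_cone (𝕜 := ℝ)
  exact hmaps (by rw [tangentCone_of_isOpen hopen ha]; trivial)
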